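/- (Faddeev) Let I be a map sending every probability measure on every finite set to a nonnegative real number. Suppose: (1) I is invariant under bijections, i.e., if f : X → X′ is a bijection and p is a probability measure on X, then I of p equals I of the pushforward measure on X′; (2) I is continuous on the simplex of probability measures on {1,…,n} for each n; (3) for any probability measure p = (p_1,…,p_n) on {1,…,n} and any t ∈ [0,1], I((tp_1, (1−t)p_1, p_2, …, p_n)) = I((p_1,…,p_n)) + p_1 · I((t, 1−t)). Then there exists a constant c ≥ 0 such that I(p) = c · H(p) for all p, where H(p) = −Σ p_i ln p_i is Shannon entropy. -/

import Mathlib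

open scoped BigOperators Classical
open Filter Topology Real

/-- `p` is a probability measure on the finite set `X`. -/
def IsProb {X : Type} [Fintype X] (p : X → ℝ) : Prop :=
  (∀ i, 0 ≤ p i) ∧ ∑ i, p i = 1

/-- `p` is a (nonnegative) measure on the finite set `X`. -/
def IsMeas {X : Type} [Fintype X] (p : X → ℝ) : Prop :=
  ∀ i, 0 ≤ p i

/-- `f` is a measure-preserving function from `(X, p)` to `(Y, q)`. -/
def IsMP {X Y : Type} [Fintype X] [Fintype Y] (p : X → ℝ) (q : Y → ℝ) (f : X → Y) : Prop :=
  ∀ j : Y, q j = ∑ i, if f i = j then p i else 0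

/-- Shannon entropy (with the convention `0 * log 0 = 0`, automatic since `Real.log 0 = 0`). -/
noncomputable def shannon {X : Type} [Fintype X] (p : X → ℝ) : ℝ :=
  -∑ i, p i * Real.log (p i)

/-- The convex combination `λ p ⊕ (1 - λ) q` on the disjoint union. -/
noncomputable def cvx (lam : ℝ) {X Y : Type} (p : X → ℝ) (q : Y → ℝ) : X ⊕ Y → ℝ :=
  Sum.elim (fun i => lam * p i) (fun j => (1 - lam) * q j)

/-- The direct sum `p ⊕ q` on the disjoint union. -/
def dsum {X Y : Type} (p : X → ℝ) (q : Y → ℝ) : X ⊕ Y → ℝ :=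
  Sum.elim p q

/-- Extended Shannon entropy of a measure on a finite set. -/
noncomputable def shannonExt {X : Type} [Fintype X] (p : X → ℝ) : ℝ :=
  if (∑ i, p i) = 0 then 0 else (∑ i, p i) * shannon (fun i => p i / ∑ j, p j)

/-- Tsallis entropy of order `α` of a probability measure. -/
noncomputable def tsallis (α : ℝ) {X : Type} [Fintype X] (p : X → ℝ) : ℝ :=
  if α = 1 then shannon p else (1 / (α - 1)) * (1 - ∑ i, p i ^ α)

/-- Extended Tsallis entropy of order `α` of a measure on a finite set. -/
noncomputable def tsallisExt (α : ℝ) {X : Type} [Fintype X] (p : X → ℝ) : ℝ :=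
  if (∑ i, p i) = 0 then 0 else (∑ i, p i) ^ α * tsallis α (fun i => p i / ∑ j, p j)

section Faddeev

variable (I : ∀ {X : Type} [Fintype X], (X → ℝ) → ℝ)

/-- uniform entropy -/
noncomputable def fI (n : ℕ) : ℝ := I (fun _ : Fin n => (n : ℝ)⁻¹)

/-- binary entropy value -/
noncomputable def gI (t : ℝ) : ℝ := I ![t, 1 - t]

variable
    (hbij : ∀ {X X' : Type} [Fintype X] [Fintype X'] (e : X ≃ X') (p : X → ℝ),
      IsProb p → I (fun j => p (e.symm j)) = I p)
    (hrec : ∀ (n : ℕ) (p : Fin (n + 1) → ℝ), IsProb p → ∀ t : ℝ, 0 ≤ t → t ≤ 1 →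
      I (Fin.cons (t * p 0) (Fin.cons ((1 - t) * p 0) (Fin.tail p)))
        = I p + p 0 * I ![t, 1 - t])

lemma isProb_cons {n : ℕ} {x : ℝ} {w : Fin n → ℝ} (hx : 0 ≤ x) (hw : ∀ i, 0 ≤ w i)
    (hs : x + ∑ i, w i = 1) : IsProb (Fin.cons x w) := by
  refine ⟨fun i => ?_, by rw [Fin.sum_cons]; exact hs⟩
  refine Fin.cases ?_ (fun j => ?_) i
  · simpa using hx
  · simpa using hw j

lemma isProb_tail {n : ℕ} {x : ℝ} {w : Fin n → ℝ} (h : IsProb (Fin.cons x w)) :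
    (0 ≤ x ∧ (∀ i, 0 ≤ w i)) ∧ x + ∑ i, w i = 1 := by
  refine ⟨⟨by simpa using h.1 0, fun i => by simpa using h.1 i.succ⟩, ?_⟩
  have := h.2; rwa [Fin.sum_cons] at this

lemma cons_one {n : ℕ} (x : ℝ) (w : Fin (n+1) → ℝ) : (Fin.cons x w : Fin (n+2) → ℝ) 1 = w 0 := by
  rw [← Fin.succ_zero_eq_one, Fin.cons_succ]

lemma cons_two {n : ℕ} (x : ℝ) (w : Fin (n+2) → ℝ) : (Fin.cons x w : Fin (n+3) → ℝ) 2 = w 1 := by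
  rw [← Fin.succ_one_eq_two, Fin.cons_succ]

include hbij in
/-- swap first two coordinates -/
lemma Iswap01 {n : ℕ} (x y : ℝ) (w : Fin n → ℝ) (hp : IsProb (Fin.cons x (Fin.cons y w))) :
    I (Fin.cons y (Fin.cons x w)) = I (Fin.cons x (Fin.cons y w)) := by
  have h := hbij (Equiv.swap (0 : Fin (n+2)) 1) (Fin.cons x (Fin.cons y w)) hp
  rw [← h]
  congr 1
  funext j
  refine Fin.cases ?_ (fun j => ?_) j
  · simp only [Equiv.symm_swap, Equiv.swap_apply_left, Fin.cons_zero, cons_one]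
  · refine Fin.cases ?_ (fun j => ?_) j
    · simp only [Fin.succ_zero_eq_one, Equiv.symm_swap, Equiv.swap_apply_right,
        Fin.cons_zero, cons_one]
    · have h1 : j.succ.succ ≠ (0 : Fin (n+2)) := Fin.succ_ne_zero _
      have h2 : j.succ.succ ≠ (1 : Fin (n+2)) := by
        rw [← Fin.succ_zero_eq_one]
        exact fun hh => Fin.succ_ne_zero _ (Fin.succ_injective _ hh)
      simp only [Equiv.symm_swap, Equiv.swap_apply_of_ne_of_ne h1 h2, Fin.cons_succ]

include hbij in
/-- swap coordinates 1 and 2 -/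
lemma Iswap12 {n : ℕ} (x y z : ℝ) (w : Fin n → ℝ)
    (hp : IsProb (Fin.cons x (Fin.cons y (Fin.cons z w)))) :
    I (Fin.cons x (Fin.cons z (Fin.cons y w))) = I (Fin.cons x (Fin.cons y (Fin.cons z w))) := by
  have h := hbij (Equiv.swap (1 : Fin (n+3)) 2) (Fin.cons x (Fin.cons y (Fin.cons z w))) hp
  rw [← h]
  congr 1
  funext j
  have h01 : (0 : Fin (n+3)) ≠ 1 := by simp
  have h02 : (0 : Fin (n+3)) ≠ 2 := by
    rw [← Fin.succ_one_eq_two]; exact (Fin.succ_ne_zero _).symm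
  refine Fin.cases ?_ (fun j => ?_) j
  · simp only [Equiv.symm_swap, Equiv.swap_apply_of_ne_of_ne h01 h02, Fin.cons_zero]
  · refine Fin.cases ?_ (fun j => ?_) j
    · simp only [Fin.succ_zero_eq_one, Equiv.symm_swap, Equiv.swap_apply_left,
        cons_one, cons_two, Fin.cons_zero]
    · refine Fin.cases ?_ (fun j => ?_) j
      · simp only [Fin.succ_zero_eq_one, Fin.succ_one_eq_two, Equiv.symm_swap,
          Equiv.swap_apply_right, cons_one, cons_two, Fin.cons_zero]
      · have h1 : j.succ.succ.succ ≠ (1 : Fin (n+3)) := by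
          rw [← Fin.succ_zero_eq_one]
          exact fun hh => Fin.succ_ne_zero _ (Fin.succ_injective _ hh)
        have h2 : j.succ.succ.succ ≠ (2 : Fin (n+3)) := by
          rw [← Fin.succ_one_eq_two, ← Fin.succ_zero_eq_one]
          intro hh
          exact Fin.succ_ne_zero _ (Fin.succ_injective _ (Fin.succ_injective _ hh))
        simp only [Equiv.symm_swap, Equiv.swap_apply_of_ne_of_ne h1 h2, Fin.cons_succ]

include hrec in
lemma I_single : I ![(1:ℝ)] = 0 := by
  have hp : IsProb (![1] : Fin 1 → ℝ) := ⟨fun i => by fin_cases i <;> norm_num, by simp⟩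
  have h := hrec 0 ![1] hp (1/2) (by norm_num) (by norm_num)
  have hv : Fin.cons ((1:ℝ)/2 * ![(1:ℝ)] 0) (Fin.cons ((1 - 1/2) * ![(1:ℝ)] 0) (Fin.tail ![(1:ℝ)]))
      = ![(1:ℝ)/2, 1 - 1/2] := by
    funext i
    refine Fin.cases ?_ (fun j => ?_) i
    · norm_num
    · refine Fin.cases ?_ (fun k => k.elim0) j
      norm_num
  rw [hv] at h
  have h0 : (![(1:ℝ)] 0) = 1 := rfl
  rw [h0, one_mul] at h
  linarith

include hbij hrec in
lemma I_10 : I ![(1:ℝ), 0] = 0 := by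
  have hp10 : IsProb (![(1:ℝ), 0]) := ⟨fun i => by fin_cases i <;> norm_num, by
    simp [Fin.sum_univ_two]⟩
  have hphalf : IsProb (![(1:ℝ)/2, 1/2]) := ⟨fun i => by fin_cases i <;> norm_num, by
    simp [Fin.sum_univ_two]; norm_num⟩
  have h01 : I ![(0:ℝ), 1] = I ![(1:ℝ), 0] :=
    Iswap01 I hbij 1 0 ![] hp10
  have ha := hrec 1 ![(1:ℝ), 0] hp10 (1/2) (by norm_num) (by norm_num)
  have hva : Fin.cons ((1:ℝ)/2 * ![(1:ℝ),0] 0) (Fin.cons ((1 - 1/2) * ![(1:ℝ),0] 0)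
      (Fin.tail ![(1:ℝ),0])) = (Fin.cons ((1:ℝ)/2) (Fin.cons ((1:ℝ)/2) (Fin.cons 0 ![])) : Fin 3 → ℝ) := by
    funext i
    refine Fin.cases ?_ (fun j => ?_) i
    · norm_num
    · refine Fin.cases ?_ (fun k => ?_) j
      · norm_num
      · refine Fin.cases ?_ (fun l => l.elim0) k
        simp [cons_two, cons_one, Fin.tail]
  rw [hva] at ha
  have hb := hrec 1 ![(1:ℝ)/2, 1/2] hphalf 0 le_rfl zero_le_one
  have hvb : Fin.cons ((0:ℝ) * ![(1:ℝ)/2,1/2] 0) (Fin.cons ((1 - 0) * ![(1:ℝ)/2,1/2] 0)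
      (Fin.tail ![(1:ℝ)/2,1/2])) = (Fin.cons (0:ℝ) (Fin.cons ((1:ℝ)/2) (Fin.cons ((1:ℝ)/2) ![])) : Fin 3 → ℝ) := by
    funext i
    refine Fin.cases ?_ (fun j => ?_) i
    · norm_num
    · refine Fin.cases ?_ (fun k => ?_) j
      · norm_num
      · refine Fin.cases ?_ (fun l => l.elim0) k
        simp [cons_two, cons_one, Fin.tail]
  rw [hvb] at hb
  have hp3 : IsProb ((Fin.cons ((1:ℝ)/2) (Fin.cons ((1:ℝ)/2) (Fin.cons 0 ![])) : Fin 3 → ℝ)) := by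
    refine isProb_cons (by norm_num) ?_ ?_
    · intro i
      refine Fin.cases ?_ (fun k => ?_) i
      · norm_num
      · refine Fin.cases ?_ (fun l => l.elim0) k; norm_num
    · norm_num [Fin.sum_cons]
  have hp4 : IsProb ((Fin.cons ((1:ℝ)/2) (Fin.cons 0 (Fin.cons ((1:ℝ)/2) ![])) : Fin 3 → ℝ)) := by
    refine isProb_cons (by norm_num) ?_ ?_
    · intro i
      refine Fin.cases ?_ (fun k => ?_) i
      · norm_num
      · refine Fin.cases ?_ (fun l => l.elim0) k; norm_num
    · norm_num [Fin.sum_cons]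
  have s12 := Iswap12 I hbij ((1:ℝ)/2) ((1:ℝ)/2) 0 ![] hp3
  have s01 := Iswap01 I hbij ((1:ℝ)/2) 0 (Fin.cons ((1:ℝ)/2) (![] : Fin 0 → ℝ)) hp4
  -- s12 : I (cons ½ (cons 0 (cons ½ ![]))) = I (cons ½ (cons ½ (cons 0 ![])))
  -- s01 : I (cons 0 (cons ½ (cons ½ ![]))) = I (cons ½ (cons 0 (cons ½ ![])))
  have hhalf : I ![(1:ℝ)/2, 1 - 1/2] = I ![(1:ℝ)/2, 1/2] := by norm_num
  have hzo : I ![(0:ℝ), 1 - 0] = I ![(0:ℝ), 1] := by norm_num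
  have e10 : (![(1:ℝ), 0]) 0 = 1 := rfl
  have ehalf : (![(1:ℝ)/2, 1/2]) 0 = 1/2 := rfl
  rw [e10, one_mul, hhalf] at ha
  rw [ehalf, hzo, h01] at hb
  -- hb : I (cons 0 (cons ½ (cons ½ ![]))) = I ![1/2,1/2] + 1/2 * I ![1,0]
  -- ha : I (cons ½ (cons ½ (cons 0 ![]))) = I ![1,0] + I ![1/2,1/2]
  have s12' : I ((Fin.cons ((1:ℝ)/2) (Fin.cons 0 (Fin.cons ((1:ℝ)/2) ![])) : Fin 3 → ℝ))
      = I (Fin.cons ((1:ℝ)/2) (Fin.cons ((1:ℝ)/2) (Fin.cons (0:ℝ) (![] : Fin 0 → ℝ)))) := s12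
  have s01' : I ((Fin.cons (0:ℝ) (Fin.cons ((1:ℝ)/2) (Fin.cons ((1:ℝ)/2) ![])) : Fin 3 → ℝ))
      = I ((Fin.cons ((1:ℝ)/2) (Fin.cons (0:ℝ) (Fin.cons ((1:ℝ)/2) ![])) : Fin 3 → ℝ)) := s01
  have key : I (Fin.cons (0:ℝ) (Fin.cons ((1:ℝ)/2) (Fin.cons (1/2) (![] : Fin 0 → ℝ))))
      = I ((Fin.cons ((1:ℝ)/2) (Fin.cons ((1:ℝ)/2) (Fin.cons 0 ![])) : Fin 3 → ℝ)) := by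
    rw [s01', s12']
  rw [key, ha] at hb
  linarith

include hbij hrec in
lemma Irec1 {n : ℕ} (q : Fin (n+2) → ℝ) (hq : IsProb q) (t : ℝ) (ht0 : 0 ≤ t) (ht1 : t ≤ 1) :
    I (Fin.cons (q 0) (Fin.cons (t * q 1) (Fin.cons ((1 - t) * q 1) (Fin.tail (Fin.tail q)))))
      = I q + q 1 * I ![t, 1 - t] := by
  set w := Fin.tail (Fin.tail q) with hw_def
  have hq0 : 0 ≤ q 0 := hq.1 0
  have hq1 : 0 ≤ q 1 := hq.1 1
  have hw : ∀ i, 0 ≤ w i := fun i => hq.1 i.succ.succ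
  have h2 : q = Fin.cons (q 0) (Fin.cons (q 1) w) := by
    funext i
    refine Fin.cases ?_ (fun j => ?_) i
    · simp
    · refine Fin.cases ?_ (fun l => ?_) j
      · rw [Fin.cons_succ, Fin.cons_zero, Fin.succ_zero_eq_one]
      · rw [Fin.cons_succ, Fin.cons_succ]; rfl
  have hsum : q 0 + (q 1 + ∑ i, w i) = 1 := by
    have := hq.2
    conv_lhs at this => rw [h2]
    rwa [Fin.sum_cons, Fin.sum_cons] at this
  have hq' : IsProb (Fin.cons (q 1) (Fin.cons (q 0) w)) := by
    refine isProb_cons hq1 (fun i => ?_) ?_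
    · refine Fin.cases ?_ (fun j => ?_) i
      · simpa using hq0
      · simpa using hw j
    · rw [Fin.sum_cons]; linarith
  have hIq' : I (Fin.cons (q 1) (Fin.cons (q 0) w)) = I q := by
    have hs : I (Fin.cons (q 1) (Fin.cons (q 0) w)) = I (Fin.cons (q 0) (Fin.cons (q 1) w)) :=
      Iswap01 I hbij (q 0) (q 1) w (h2 ▸ hq)
    rw [hs, ← h2]
  have h1 := hrec (n+1) (Fin.cons (q 1) (Fin.cons (q 0) w)) hq' t ht0 ht1
  simp only [Fin.cons_zero, Fin.tail_cons] at h1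
  have hp3 : IsProb (Fin.cons (t * q 1) (Fin.cons ((1-t) * q 1) (Fin.cons (q 0) w))) := by
    refine isProb_cons (mul_nonneg ht0 hq1) (fun i => ?_) ?_
    · refine Fin.cases ?_ (fun j => ?_) i
      · simpa using mul_nonneg (by linarith) hq1
      · refine Fin.cases ?_ (fun l => ?_) j
        · simpa using hq0
        · simpa using hw l
    · rw [Fin.sum_cons, Fin.sum_cons]; nlinarith [hsum]
  have hp4 : IsProb (Fin.cons (t * q 1) (Fin.cons (q 0) (Fin.cons ((1-t) * q 1) w))) := by
    refine isProb_cons (mul_nonneg ht0 hq1) (fun i => ?_) ?_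
    · refine Fin.cases ?_ (fun j => ?_) i
      · simpa using hq0
      · refine Fin.cases ?_ (fun l => ?_) j
        · simpa using mul_nonneg (by linarith) hq1
        · simpa using hw l
    · rw [Fin.sum_cons, Fin.sum_cons]; nlinarith [hsum]
  have s12 : I (Fin.cons (t * q 1) (Fin.cons (q 0) (Fin.cons ((1-t) * q 1) w)))
      = I (Fin.cons (t * q 1) (Fin.cons ((1-t) * q 1) (Fin.cons (q 0) w))) :=
    Iswap12 I hbij (t * q 1) ((1-t) * q 1) (q 0) w hp3
  have s01 : I (Fin.cons (q 0) (Fin.cons (t * q 1) (Fin.cons ((1-t) * q 1) w)))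
      = I (Fin.cons (t * q 1) (Fin.cons (q 0) (Fin.cons ((1-t) * q 1) w))) :=
    Iswap01 I hbij (t * q 1) (q 0) (Fin.cons ((1-t) * q 1) w) hp4
  rw [s01, s12, h1, hIq']

lemma sum_const_fin (n : ℕ) (c : ℝ) : (∑ _i : Fin n, c) = n * c := by
  simp [Finset.sum_const, Finset.card_univ, nsmul_eq_mul]

include hrec in
lemma fI_one : fI I 1 = 0 := by
  have hv : (fun _ : Fin 1 => ((1:ℕ):ℝ)⁻¹) = ![(1:ℝ)] := by
    funext i; fin_cases i; norm_num
  show I (fun _ : Fin 1 => ((1:ℕ):ℝ)⁻¹) = 0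
  rw [hv]
  exact I_single I hrec

include hbij hrec in
lemma lemT : ∀ a : ℕ, 1 ≤ a → ∀ (b N : ℕ), a + b = N →
    I (Fin.cons ((a:ℝ)/(N:ℝ)) (fun _ : Fin b => 1/(N:ℝ)))
      = fI I N - ((a:ℝ)/(N:ℝ)) * fI I a := by
  intro a ha
  induction a, ha using Nat.le_induction with
  | base =>
    intro b N hN
    subst hN
    have hN0 : (0:ℝ) < ((1+b:ℕ):ℝ) := by positivity
    have hv : (Fin.cons (((1:ℕ):ℝ)/((1+b:ℕ):ℝ)) (fun _ : Fin b => 1/((1+b:ℕ):ℝ)))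
        = fun _ : Fin (b+1) => 1/((1+b:ℕ):ℝ) := by
      funext i
      refine Fin.cases ?_ (fun j => ?_) i
      · simp
      · simp
    rw [hv]
    have hprob : IsProb (fun _ : Fin (b+1) => 1/((1+b:ℕ):ℝ)) := by
      constructor
      · intro i; positivity
      · rw [sum_const_fin]; field_simp; push_cast; ring
    have hcongr : I (fun _ : Fin (1+b) => 1/((1+b:ℕ):ℝ))
        = I (fun _ : Fin (b+1) => 1/((1+b:ℕ):ℝ)) :=
      hbij (finCongr (show b+1 = 1+b by omega)) (fun _ : Fin (b+1) => 1/((1+b:ℕ):ℝ)) hprob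
    have hfI : fI I (1+b) = I (fun _ : Fin (1+b) => 1/((1+b:ℕ):ℝ)) := by
      show I _ = I _
      congr 1
      funext i
      rw [one_div]
    rw [fI_one I hrec, mul_zero, sub_zero, hfI, hcongr]
  | succ a ha IH =>
    intro b N hN
    have hNpos : (0:ℝ) < (N:ℝ) := by
      have : 0 < N := by omega
      exact_mod_cast this
    have hNe : (N:ℝ) ≠ 0 := ne_of_gt hNpos
    have ha1 : ((a:ℝ)+1) ≠ 0 := by positivity
    have hcast : (a:ℝ) + 1 + (b:ℝ) = (N:ℝ) := by
      have := congrArg (Nat.cast : ℕ → ℝ) hN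
      push_cast at this
      linarith
    have hq : IsProb (Fin.cons (((a+1:ℕ):ℝ)/(N:ℝ)) (fun _ : Fin b => 1/(N:ℝ))) := by
      refine isProb_cons (by positivity) (fun i => by positivity) ?_
      rw [sum_const_fin]; push_cast; field_simp; linarith
    have h1 := hrec b _ hq ((a:ℝ)/((a:ℝ)+1)) (by positivity)
      (by rw [div_le_one (by positivity)]; linarith)
    have hv : Fin.cons ((a:ℝ)/((a:ℝ)+1) * ((Fin.cons (((a+1:ℕ):ℝ)/(N:ℝ)) (fun _ : Fin b => 1/(N:ℝ)) : Fin (b+1) → ℝ) 0))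
        (Fin.cons ((1 - (a:ℝ)/((a:ℝ)+1)) * ((Fin.cons (((a+1:ℕ):ℝ)/(N:ℝ)) (fun _ : Fin b => 1/(N:ℝ)) : Fin (b+1) → ℝ) 0))
          (Fin.tail ((Fin.cons (((a+1:ℕ):ℝ)/(N:ℝ)) (fun _ : Fin b => 1/(N:ℝ))) : Fin (b+1) → ℝ)))
        = (Fin.cons ((a:ℝ)/(N:ℝ)) (fun _ : Fin (b+1) => 1/(N:ℝ)) : Fin (b+2) → ℝ) := by
      funext i
      refine Fin.cases ?_ (fun j => ?_) i
      · simp only [Fin.cons_zero]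
        push_cast
        field_simp
        try ring
      · refine Fin.cases ?_ (fun k => ?_) j
        · simp only [Fin.cons_succ, Fin.cons_zero, Fin.tail_cons]
          push_cast
          field_simp
          ring
        · simp only [Fin.cons_succ, Fin.tail_cons]
    rw [hv] at h1
    have hIH1 := IH (b+1) N (by omega)
    have hIH2 := IH 1 (a+1) (by omega)
    have hbt : (![(a:ℝ)/((a:ℝ)+1), 1 - (a:ℝ)/((a:ℝ)+1)] : Fin 2 → ℝ)
        = Fin.cons ((a:ℝ)/((a+1:ℕ):ℝ)) (fun _ : Fin 1 => 1/((a+1:ℕ):ℝ)) := by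
      funext i
      refine Fin.cases ?_ (fun j => ?_) i
      · push_cast; norm_num
      · refine Fin.cases ?_ (fun l => l.elim0) j
        show (1:ℝ) - (a:ℝ)/((a:ℝ)+1) = 1/((a+1:ℕ):ℝ)
        push_cast
        field_simp
        ring
    have h1' : fI I N - (a:ℝ)/(N:ℝ) * fI I a
        = I (Fin.cons (((a+1:ℕ):ℝ)/(N:ℝ)) (fun _ : Fin b => 1/(N:ℝ)))
          + ((a+1:ℕ):ℝ)/(N:ℝ) * (fI I (a+1) - (a:ℝ)/((a+1:ℕ):ℝ) * fI I a) := by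
      rw [← hIH1, ← hIH2]
      rw [hbt] at h1
      simpa using h1
    have e1 : ((a+1:ℕ):ℝ)/(N:ℝ) * ((a:ℝ)/((a+1:ℕ):ℝ) * fI I a) = (a:ℝ)/(N:ℝ) * fI I a := by
      push_cast
      field_simp
    rw [mul_sub, e1] at h1'
    linarith

include hbij hrec in
lemma fid (k : ℕ) (hk : 1 ≤ k) :
    I ![(k:ℝ)/((k:ℝ)+1), 1 - (k:ℝ)/((k:ℝ)+1)]
      = fI I (k+1) - ((k:ℝ)/((k:ℝ)+1)) * fI I k := by
  have h := lemT I hbij hrec k hk 1 (k+1) (by omega)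
  have hbt : (![(k:ℝ)/((k:ℝ)+1), 1 - (k:ℝ)/((k:ℝ)+1)] : Fin 2 → ℝ)
      = Fin.cons ((k:ℝ)/((k+1:ℕ):ℝ)) (fun _ : Fin 1 => 1/((k+1:ℕ):ℝ)) := by
    funext i
    refine Fin.cases ?_ (fun j => ?_) i
    · push_cast; norm_num
    · refine Fin.cases ?_ (fun l => l.elim0) j
      show (1:ℝ) - (k:ℝ)/((k:ℝ)+1) = 1/((k+1:ℕ):ℝ)
      push_cast
      field_simp
      ring
  rw [hbt]
  refine h.trans ?_
  push_cast
  ring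

include hbij hrec in
lemma lemV : ∀ k : ℕ, 1 ≤ k → ∀ (a j N : ℕ), 1 ≤ a → a + k + j = N →
    I (Fin.cons ((a:ℝ)/(N:ℝ)) (Fin.cons ((k:ℝ)/(N:ℝ)) (fun _ : Fin j => 1/(N:ℝ))))
      = fI I N - ((a:ℝ)/(N:ℝ)) * fI I a - ((k:ℝ)/(N:ℝ)) * fI I k := by
  intro k hk
  induction k, hk using Nat.le_induction with
  | base =>
    intro a j N ha hN
    have hv : (Fin.cons ((a:ℝ)/(N:ℝ)) (Fin.cons (((1:ℕ):ℝ)/(N:ℝ)) (fun _ : Fin j => 1/(N:ℝ))))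
        = (Fin.cons ((a:ℝ)/(N:ℝ)) (fun _ : Fin (j+1) => 1/(N:ℝ)) : Fin (j+2) → ℝ) := by
      funext i
      refine Fin.cases ?_ (fun l => ?_) i
      · rfl
      · refine Fin.cases ?_ (fun m => ?_) l
        · simp
        · simp
    rw [hv, lemT I hbij hrec a ha (j+1) N (by omega), fI_one I hrec]
    push_cast
    ring
  | succ k hk IH =>
    intro a j N ha hN
    have hNpos : (0:ℝ) < (N:ℝ) := by
      have : 0 < N := by omega
      exact_mod_cast this
    have hNe : (N:ℝ) ≠ 0 := ne_of_gt hNpos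
    have hk1 : ((k:ℝ)+1) ≠ 0 := by positivity
    have hcast : (a:ℝ) + ((k:ℝ)+1) + (j:ℝ) = (N:ℝ) := by
      have := congrArg (Nat.cast : ℕ → ℝ) hN
      push_cast at this
      linarith
    have hq : IsProb (Fin.cons ((a:ℝ)/(N:ℝ)) (Fin.cons (((k+1:ℕ):ℝ)/(N:ℝ))
        (fun _ : Fin j => 1/(N:ℝ)))) := by
      refine isProb_cons (by positivity) (fun i => ?_) ?_
      · refine Fin.cases ?_ (fun l => ?_) i
        · show (0:ℝ) ≤ ((k+1:ℕ):ℝ)/(N:ℝ); positivity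
        · show (0:ℝ) ≤ 1/(N:ℝ); positivity
      · rw [Fin.sum_cons, sum_const_fin]; push_cast; field_simp; linarith
    have h1 := Irec1 I hbij hrec _ hq ((k:ℝ)/((k:ℝ)+1)) (by positivity)
      (by rw [div_le_one (by positivity)]; linarith)
    simp only [Fin.cons_zero, Fin.tail_cons, cons_one] at h1
    have e_t : (k:ℝ)/((k:ℝ)+1) * (((k+1:ℕ):ℝ)/(N:ℝ)) = (k:ℝ)/(N:ℝ) := by
      push_cast; field_simp; try ring
    have e_t2 : (1 - (k:ℝ)/((k:ℝ)+1)) * (((k+1:ℕ):ℝ)/(N:ℝ)) = 1/(N:ℝ) := by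
      push_cast; field_simp; try ring
    rw [e_t, e_t2] at h1
    have hmerge : (Fin.cons ((1:ℝ)/(N:ℝ)) (fun _ : Fin j => 1/(N:ℝ)) : Fin (j+1) → ℝ)
        = (fun _ : Fin (j+1) => 1/(N:ℝ)) := by
      funext i
      refine Fin.cases ?_ (fun l => ?_) i
      · simp
      · simp
    rw [hmerge] at h1
    have hIH := IH a (j+1) N ha (by omega)
    rw [hIH] at h1
    have hfid : I ![(k:ℝ)/((k:ℝ)+1), 1 - (k:ℝ)/((k:ℝ)+1)]
        = fI I (k+1) - ((k:ℝ)/((k:ℝ)+1)) * fI I k := fid I hbij hrec k hk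
    rw [hfid] at h1
    have e1 : ((k+1:ℕ):ℝ)/(N:ℝ) * ((k:ℝ)/((k:ℝ)+1) * fI I k) = (k:ℝ)/(N:ℝ) * fI I k := by
      push_cast
      field_simp
    rw [mul_sub, e1] at h1
    push_cast
    push_cast at h1
    linarith

include hbij hrec in
lemma twoBlock (a b N : ℕ) (ha : 1 ≤ a) (hb : 1 ≤ b) (hN : a + b = N) :
    I ![(a:ℝ)/(N:ℝ), 1 - (a:ℝ)/(N:ℝ)]
      = fI I N - ((a:ℝ)/(N:ℝ)) * fI I a - ((b:ℝ)/(N:ℝ)) * fI I b := by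
  have hNpos : (0:ℝ) < (N:ℝ) := by
    have : 0 < N := by omega
    exact_mod_cast this
  have hcast : (a:ℝ) + (b:ℝ) = (N:ℝ) := by
    have := congrArg (Nat.cast : ℕ → ℝ) hN
    push_cast at this
    linarith
  have h := lemV I hbij hrec b hb a 0 N ha (by omega)
  have hbt : (![(a:ℝ)/(N:ℝ), 1 - (a:ℝ)/(N:ℝ)] : Fin 2 → ℝ)
      = Fin.cons ((a:ℝ)/(N:ℝ)) (Fin.cons ((b:ℝ)/(N:ℝ)) (fun _ : Fin 0 => 1/(N:ℝ))) := by
    funext i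
    refine Fin.cases ?_ (fun j => ?_) i
    · rfl
    · refine Fin.cases ?_ (fun l => l.elim0) j
      show (1:ℝ) - (a:ℝ)/(N:ℝ) = (b:ℝ)/(N:ℝ)
      field_simp
      linarith
  rw [hbt]
  exact h

include hbij hrec in
lemma fmul (a b : ℕ) (ha : 1 ≤ a) (hb : 1 ≤ b) : fI I (a*b) = fI I a + fI I b := by
  induction a, ha using Nat.le_induction with
  | base => rw [one_mul, fI_one I hrec]; ring
  | succ a ha IH =>
    have hbR : (0:ℝ) < (b:ℝ) := by exact_mod_cast hb
    have haR : (0:ℝ) ≤ (a:ℝ) := Nat.cast_nonneg a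
    have h1 := twoBlock I hbij hrec b (a*b) ((a+1)*b) hb (Nat.one_le_iff_ne_zero.mpr (Nat.mul_ne_zero (by omega) (by omega)))
      (by ring)
    have h2 := twoBlock I hbij hrec 1 a (a+1) le_rfl ha (by omega)
    have hveq : (![(b:ℝ)/(((a+1)*b:ℕ):ℝ), 1 - (b:ℝ)/(((a+1)*b:ℕ):ℝ)] : Fin 2 → ℝ)
        = ![((1:ℕ):ℝ)/((a+1:ℕ):ℝ), 1 - ((1:ℕ):ℝ)/((a+1:ℕ):ℝ)] := by
      have : (b:ℝ)/(((a+1)*b:ℕ):ℝ) = ((1:ℕ):ℝ)/((a+1:ℕ):ℝ) := by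
        push_cast
        rw [div_eq_div_iff (by positivity) (by positivity)]
        ring
      rw [this]
    rw [hveq, h2] at h1
    have e2 : (((a*b:ℕ)):ℝ)/(((a+1)*b:ℕ):ℝ) = (a:ℝ)/((a+1:ℕ):ℝ) := by
      push_cast
      rw [div_eq_div_iff (by positivity) (by positivity)]
      ring
    have e3 : ((b:ℕ):ℝ)/(((a+1)*b:ℕ):ℝ) = ((1:ℕ):ℝ)/((a+1:ℕ):ℝ) := by
      push_cast
      rw [div_eq_div_iff (by positivity) (by positivity)]
      ring
    rw [e2, e3, IH, fI_one I hrec] at h1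
    push_cast at h1 ⊢
    have ha1 : ((a:ℝ)+1) ≠ 0 := by positivity
    field_simp at h1
    ring_nf at h1
    have key : ((a:ℝ)+1) * (fI I (a+1) + fI I b - fI I ((a+1)*b)) = 0 := by
      ring_nf
      linarith [h1]
    rcases mul_eq_zero.mp key with hzz | hzz
    · exact absurd hzz ha1
    · linarith

/-- the constant `c` -/
noncomputable def cI : ℝ := fI I 2 / Real.log 2

/-- `φ n = f n - c log n` -/
noncomputable def phiI (n : ℕ) : ℝ := fI I n - cI I * Real.log n

/-- binary entropy -/
noncomputable def hb (t : ℝ) : ℝ := -(t * Real.log t + (1 - t) * Real.log (1 - t))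

include hrec in
lemma phi_one : phiI I 1 = 0 := by
  unfold phiI
  rw [fI_one I hrec]
  simp

lemma log_two_ne : Real.log 2 ≠ 0 := ne_of_gt (Real.log_pos (by norm_num))

lemma phi_two : phiI I 2 = 0 := by
  unfold phiI cI
  field_simp
  norm_num

include hbij hrec in
lemma phi_mul (a b : ℕ) (ha : 1 ≤ a) (hb' : 1 ≤ b) : phiI I (a*b) = phiI I a + phiI I b := by
  unfold phiI
  rw [fmul I hbij hrec a b ha hb']
  have : Real.log ((a*b : ℕ) : ℝ) = Real.log a + Real.log b := by
    push_cast
    rw [Real.log_mul (by exact_mod_cast Nat.one_le_iff_ne_zero.mp ha)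
      (by exact_mod_cast Nat.one_le_iff_ne_zero.mp hb')]
  rw [this]
  ring

include hbij hrec in
lemma phi_pow (m : ℕ) (hm : 1 ≤ m) (j : ℕ) : phiI I (m^j) = j * phiI I (m) := by
  induction j with
  | zero => simpa using phi_one I hrec
  | succ j IH =>
    rw [pow_succ, phi_mul I hbij hrec _ m (Nat.one_le_iff_ne_zero.mpr (by positivity)) hm, IH]
    push_cast
    ring

include hbij hrec in
lemma twoBlockPhi (a b N : ℕ) (ha : 1 ≤ a) (hb' : 1 ≤ b) (hN : a + b = N) :
    I ![(a:ℝ)/(N:ℝ), 1 - (a:ℝ)/(N:ℝ)] - cI I * hb ((a:ℝ)/(N:ℝ))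
      = phiI I N - ((a:ℝ)/(N:ℝ)) * phiI I a - ((b:ℝ)/(N:ℝ)) * phiI I b := by
  have h : I ![(a:ℝ)/(N:ℝ), 1 - (a:ℝ)/(N:ℝ)]
      = fI I N - ((a:ℝ)/(N:ℝ)) * fI I a - ((b:ℝ)/(N:ℝ)) * fI I b :=
    twoBlock I hbij hrec a b N ha hb' hN
  have haR : (0:ℝ) < (a:ℝ) := by exact_mod_cast ha
  have hbR : (0:ℝ) < (b:ℝ) := by exact_mod_cast hb'
  have hNR : (0:ℝ) < (N:ℝ) := by
    have : 0 < N := by omega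
    exact_mod_cast this
  have hcast : (a:ℝ) + (b:ℝ) = (N:ℝ) := by
    have := congrArg (Nat.cast : ℕ → ℝ) hN
    push_cast at this
    linarith
  have h1x : 1 - (a:ℝ)/(N:ℝ) = (b:ℝ)/(N:ℝ) := by
    field_simp
    linarith
  have hlog : hb ((a:ℝ)/(N:ℝ))
      = Real.log N - ((a:ℝ)/(N:ℝ)) * Real.log a - ((b:ℝ)/(N:ℝ)) * Real.log b := by
    unfold hb
    rw [h1x, Real.log_div (ne_of_gt haR) (ne_of_gt hNR), Real.log_div (ne_of_gt hbR) (ne_of_gt hNR)]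
    have hsum : (a:ℝ)/(N:ℝ) + (b:ℝ)/(N:ℝ) = 1 := by field_simp; linarith
    linear_combination Real.log (N:ℝ) * hsum
  rw [h, hlog]
  unfold phiI
  ring

/-- the error sequence -/
noncomputable def AI (m : ℕ) : ℝ :=
  phiI I (2*m+1) - ((m:ℝ)/((2*m+1:ℕ):ℝ)) * phiI I m
    - (((m+1:ℕ):ℝ)/((2*m+1:ℕ):ℝ)) * phiI I (m+1)

include hbij hrec in
lemma AI_eq (m : ℕ) (hm : 1 ≤ m) :
    AI I m = I ![((m:ℕ):ℝ)/((2*m+1:ℕ):ℝ), 1 - ((m:ℕ):ℝ)/((2*m+1:ℕ):ℝ)]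
      - cI I * hb (((m:ℕ):ℝ)/((2*m+1:ℕ):ℝ)) := by
  have h := twoBlockPhi I hbij hrec m (m+1) (2*m+1) hm (by omega) (by omega)
  unfold AI
  rw [h]

lemma vcont : Continuous (fun t : ℝ => (![t, 1-t] : Fin 2 → ℝ)) := by
  apply continuous_pi
  intro i
  fin_cases i
  · simpa using continuous_id'
  · simpa using (continuous_sub_left (1:ℝ))

lemma isProb_pair {t : ℝ} (h0 : 0 ≤ t) (h1 : t ≤ 1) : IsProb ![t, 1-t] := by
  constructor
  · intro i
    fin_cases i
    · simpa using h0
    · simp; linarith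
  · simp [Fin.sum_univ_two]

variable (hcont : ∀ n : ℕ, ContinuousOn (fun p : Fin n → ℝ => I p) {p | IsProb p})

include hcont in
lemma g_contOn : ContinuousOn (fun t : ℝ => I ![t, 1-t]) (Set.Icc (0:ℝ) 1) := by
  exact (hcont 2).comp vcont.continuousOn
    (fun t ht => isProb_pair ht.1 ht.2)

lemma xseq_tendsto : Tendsto (fun m : ℕ => (m:ℝ)/((2*m+1:ℕ):ℝ)) atTop (𝓝 (1/2)) := by
  have h2 : Tendsto (fun m : ℕ => (2:ℝ) + 1/(m:ℝ)) atTop (𝓝 2) := by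
    have h := (tendsto_const_nhds : Tendsto (fun _ : ℕ => (2:ℝ)) atTop (𝓝 2)).add
      tendsto_one_div_atTop_nhds_zero_nat
    simpa using h
  have h3 : Tendsto (fun m : ℕ => ((2:ℝ) + 1/(m:ℝ))⁻¹) atTop (𝓝 (2⁻¹)) :=
    h2.inv₀ (by norm_num)
  rw [show (1:ℝ)/2 = 2⁻¹ by norm_num]
  refine h3.congr' ?_
  filter_upwards [eventually_ge_atTop 1] with m hm
  have hm0 : (m:ℝ) ≠ 0 := by
    have : (0:ℝ) < (m:ℝ) := by exact_mod_cast hm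
    linarith
  push_cast
  rw [eq_div_iff (by positivity)]
  field_simp
  try ring

lemma hb_contAt {x : ℝ} (h0 : x ≠ 0) (h1 : x ≠ 1) : ContinuousAt hb x := by
  unfold hb
  have l1 : ContinuousAt (fun t : ℝ => t * Real.log t) x :=
    continuousAt_id.mul (Real.continuousAt_log h0)
  have lsub : ContinuousAt (fun t : ℝ => 1 - t) x :=
    (continuous_const.sub continuous_id).continuousAt
  have l2 : ContinuousAt (fun t : ℝ => (1-t) * Real.log (1-t)) x := by
    have hlog : ContinuousAt Real.log (1 - x) :=
      Real.continuousAt_log (by intro hh; exact h1 (by linarith))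
    exact lsub.mul (hlog.comp lsub)
  exact (l1.add l2).neg

include hbij hrec hcont in
lemma AI_tendsto : Tendsto (AI I) atTop (𝓝 0) := by
  have hxt := xseq_tendsto
  have hfI2 : I ![(1:ℝ)/2, 1 - 1/2] = fI I 2 := by
    show I _ = I _
    congr 1
    funext i
    fin_cases i <;> norm_num
  have hb_half : hb (1/2) = Real.log 2 := by
    unfold hb
    have hlog2 : Real.log ((1:ℝ)/2) = -Real.log 2 := by
      rw [one_div, Real.log_inv]
    rw [show (1:ℝ) - 1/2 = 1/2 by norm_num, hlog2]
    ring
  have hG0 : I ![(1:ℝ)/2, 1 - 1/2] - cI I * hb (1/2) = 0 := by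
    rw [hfI2, hb_half]
    unfold cI
    field_simp
    ring
  have hIcc : ∀ m : ℕ, (m:ℝ)/((2*m+1:ℕ):ℝ) ∈ Set.Icc (0:ℝ) 1 := fun m => by
    constructor
    · positivity
    · rw [div_le_one (by positivity)]
      push_cast
      linarith
  have hwithin : Tendsto (fun m : ℕ => (m:ℝ)/((2*m+1:ℕ):ℝ)) atTop
      (𝓝[Set.Icc (0:ℝ) 1] (1/2)) :=
    tendsto_nhdsWithin_of_tendsto_nhds_of_eventually_within _ hxt
      (Filter.Eventually.of_forall hIcc)
  have hIpart : Tendsto (fun m : ℕ => I ![(m:ℝ)/((2*m+1:ℕ):ℝ), 1 - (m:ℝ)/((2*m+1:ℕ):ℝ)])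
      atTop (𝓝 (I ![(1:ℝ)/2, 1 - 1/2])) := by
    have hc := (g_contOn I hcont) (1/2) (by constructor <;> norm_num)
    have hc' : Tendsto (fun t : ℝ => I ![t, 1-t]) (𝓝[Set.Icc (0:ℝ) 1] (1/2))
        (𝓝 (I ![(1:ℝ)/2, 1 - 1/2])) := hc
    exact hc'.comp hwithin
  have hbpart : Tendsto (fun m : ℕ => hb ((m:ℝ)/((2*m+1:ℕ):ℝ))) atTop (𝓝 (hb (1/2))) :=
    ((hb_contAt (by norm_num) (by norm_num)).tendsto).comp hxt
  have hmain : Tendsto (fun m : ℕ => I ![(m:ℝ)/((2*m+1:ℕ):ℝ), 1 - (m:ℝ)/((2*m+1:ℕ):ℝ)]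
      - cI I * hb ((m:ℝ)/((2*m+1:ℕ):ℝ))) atTop (𝓝 0) := by
    have h := hIpart.sub (hbpart.const_mul (cI I))
    rwa [hG0] at h
  refine hmain.congr' ?_
  filter_upwards [eventually_ge_atTop 1] with m hm
  exact (AI_eq I hbij hrec m hm).symm

/-- sup of `|AI|` over the dyadic window `[2^k, 2^(k+1))` -/
noncomputable def WI (k : ℕ) : ℝ :=
  (Finset.Ico (2^k) (2^(k+1))).sup'
    (Finset.nonempty_Ico.mpr (Nat.pow_lt_pow_succ one_lt_two)) (fun m => |AI I m|)

lemma WI_nonneg (k : ℕ) : 0 ≤ WI I k := by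
  have h := Finset.le_sup' (fun m => |AI I m|)
    (Finset.mem_Ico.mpr ⟨le_refl (2^k), Nat.pow_lt_pow_succ (n := k) one_lt_two⟩)
  exact le_trans (abs_nonneg _) h

lemma SI_nonneg (k : ℕ) : 0 ≤ ∑ i ∈ Finset.range k, WI I i :=
  Finset.sum_nonneg fun i _ => WI_nonneg I i

lemma WI_tendsto (hA : Tendsto (AI I) atTop (𝓝 0)) : Tendsto (WI I) atTop (𝓝 0) := by
  rw [Metric.tendsto_atTop] at hA ⊢
  intro ε hε
  obtain ⟨N0, hN0⟩ := hA ε hε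
  refine ⟨N0, fun k hk => ?_⟩
  have hWlt : WI I k < ε := by
    unfold WI
    rw [Finset.sup'_lt_iff]
    intro m hm
    rw [Finset.mem_Ico] at hm
    have hmN : N0 ≤ m := le_trans (le_trans hk (le_of_lt (Nat.lt_two_pow_self (n := k)))) hm.1
    have := hN0 m hmN
    rwa [Real.dist_eq, sub_zero] at this
  rw [Real.dist_eq, sub_zero, abs_of_nonneg (WI_nonneg I k)]
  exact hWlt

include hbij hrec in
lemma Bnd : ∀ k : ℕ, ∀ n : ℕ, 2^k ≤ n → n < 2^(k+1) →
    |phiI I n| ≤ ∑ i ∈ Finset.range k, WI I i := by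
  intro k
  induction k with
  | zero =>
    intro n h1 h2
    norm_num at h1 h2
    have : n = 1 := by omega
    subst this
    rw [phi_one I hrec]
    simp
  | succ k IH =>
    intro n h1 h2
    have e1 : (2:ℕ)^(k+1) = 2 * 2^k := by ring
    have e2 : (2:ℕ)^(k+1+1) = 2 * 2^(k+1) := by ring
    rcases Nat.even_or_odd n with he | ho
    · obtain ⟨m, rfl⟩ := he
      have hm1 : 2^k ≤ m := by omega
      have hm2 : m < 2^(k+1) := by omega
      have hphi : phiI I (m + m) = phiI I m := by
        have hmm : m + m = 2 * m := by ring
        have hmpos : 1 ≤ m := le_trans Nat.one_le_two_pow hm1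
        rw [hmm, phi_mul I hbij hrec 2 m (by norm_num) hmpos, phi_two I]
        ring
      rw [hphi, Finset.sum_range_succ]
      have hIH := IH m hm1 hm2
      have hW := WI_nonneg I k
      linarith
    · obtain ⟨m, rfl⟩ := ho
      have hm1 : 2^k ≤ m := by omega
      have hm2 : m < 2^(k+1) := by omega
      have hm0 : 1 ≤ m := le_trans Nat.one_le_two_pow hm1
      have hNpos : (0:ℝ) < ((2*m+1:ℕ):ℝ) := by positivity
      have hsplit : phiI I (2*m+1) = ((m:ℝ)/((2*m+1:ℕ):ℝ)) * phiI I m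
          + (((m+1:ℕ):ℝ)/((2*m+1:ℕ):ℝ)) * phiI I (m+1) + AI I m := by
        unfold AI
        ring
      have hAle : |AI I m| ≤ WI I k :=
        Finset.le_sup' (fun m => |AI I m|) (Finset.mem_Ico.mpr ⟨hm1, hm2⟩)
      have hc1 : (0:ℝ) ≤ (m:ℝ)/((2*m+1:ℕ):ℝ) := by positivity
      have hc2 : (0:ℝ) ≤ ((m+1:ℕ):ℝ)/((2*m+1:ℕ):ℝ) := by positivity
      have hcsum : (m:ℝ)/((2*m+1:ℕ):ℝ) + ((m+1:ℕ):ℝ)/((2*m+1:ℕ):ℝ) = 1 := by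
        push_cast
        field_simp
        ring
      have hbm : |phiI I m| ≤ ∑ i ∈ Finset.range k, WI I i := IH m hm1 hm2
      have hbm1 : |phiI I (m+1)| ≤ ∑ i ∈ Finset.range k, WI I i := by
        rcases Nat.lt_or_ge (m+1) (2^(k+1)) with hlt | hge
        · exact IH (m+1) (by omega) hlt
        · have hm1eq : m + 1 = 2^(k+1) := by omega
          rw [hm1eq, phi_pow I hbij hrec 2 (by norm_num) (k+1), phi_two I]
          simpa using SI_nonneg I k
      rw [Finset.sum_range_succ, hsplit]
      have habs : |((m:ℝ)/((2*m+1:ℕ):ℝ)) * phiI I m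
          + (((m+1:ℕ):ℝ)/((2*m+1:ℕ):ℝ)) * phiI I (m+1) + AI I m|
          ≤ ((m:ℝ)/((2*m+1:ℕ):ℝ)) * |phiI I m|
            + (((m+1:ℕ):ℝ)/((2*m+1:ℕ):ℝ)) * |phiI I (m+1)| + |AI I m| := by
        refine le_trans (abs_add_le _ _) (add_le_add ?_ le_rfl)
        refine le_trans (abs_add_le _ _) (add_le_add ?_ ?_)
        · rw [abs_mul, abs_of_nonneg hc1]
        · rw [abs_mul, abs_of_nonneg hc2]
      have hS := SI_nonneg I k
      have t1 := mul_le_mul_of_nonneg_left hbm hc1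
      have t2 := mul_le_mul_of_nonneg_left hbm1 hc2
      have hcS : ((m:ℝ)/((2*m+1:ℕ):ℝ)) * (∑ i ∈ Finset.range k, WI I i)
          + (((m+1:ℕ):ℝ)/((2*m+1:ℕ):ℝ)) * (∑ i ∈ Finset.range k, WI I i)
          = ∑ i ∈ Finset.range k, WI I i := by
        linear_combination (∑ i ∈ Finset.range k, WI I i) * hcsum
      linarith

include hbij hrec hcont in
lemma phi_zero (m : ℕ) (hm : 1 ≤ m) : phiI I m = 0 := by
  rcases eq_or_lt_of_le hm with h1 | h2
  · rw [← h1]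
    exact phi_one I hrec
  · have hm2 : 2 ≤ m := h2
    have hA := AI_tendsto I hbij hrec hcont
    have hW := WI_tendsto I hA
    have hces : Tendsto (fun k : ℕ => (k:ℝ)⁻¹ * ∑ i ∈ Finset.range k, WI I i)
        atTop (𝓝 0) := hW.cesaro
    have hKge : ∀ j : ℕ, j ≤ Nat.log 2 (m^j) := fun j => by
      have h : 2^j ≤ m^j := Nat.pow_le_pow_left hm2 j
      calc j = Nat.log 2 (2^j) := (Nat.log_pow one_lt_two j).symm
        _ ≤ Nat.log 2 (m^j) := Nat.log_mono_right h
    have hKle : ∀ j : ℕ, Nat.log 2 (m^j) ≤ m * j := fun j => by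
      have h1' : m^j ≤ 2^(m*j) := by
        calc m^j ≤ (2^m)^j := Nat.pow_le_pow_left (le_of_lt (Nat.lt_two_pow_self (n := m))) j
          _ = 2^(m*j) := by rw [← pow_mul]
      calc Nat.log 2 (m^j) ≤ Nat.log 2 (2^(m*j)) := Nat.log_mono_right h1'
        _ = m*j := Nat.log_pow one_lt_two _
    have hKtend : Tendsto (fun j => Nat.log 2 (m^j)) atTop atTop :=
      tendsto_atTop_mono hKge tendsto_id
    have hbound : ∀ j : ℕ, 1 ≤ j → |phiI I m|
        ≤ (m:ℝ) * (((Nat.log 2 (m^j) : ℕ):ℝ)⁻¹ * ∑ i ∈ Finset.range (Nat.log 2 (m^j)), WI I i) := by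
      intro j hj
      have hmj1 : m^j ≠ 0 := by positivity
      have hB := Bnd I hbij hrec (Nat.log 2 (m^j)) (m^j) (Nat.pow_log_le_self 2 hmj1)
        (Nat.lt_pow_succ_log_self one_lt_two _)
      rw [phi_pow I hbij hrec m hm j, abs_mul, Nat.abs_cast] at hB
      have hKpos : (0:ℝ) < ((Nat.log 2 (m^j) : ℕ):ℝ) := by
        have h := hKge j
        have : 0 < Nat.log 2 (m^j) := by omega
        exact_mod_cast this
      have hjpos : (0:ℝ) < (j:ℝ) := by exact_mod_cast hj
      have hKlej : ((Nat.log 2 (m^j) : ℕ):ℝ) ≤ (m:ℝ) * (j:ℝ) := by exact_mod_cast hKle j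
      have hSnn : 0 ≤ ∑ i ∈ Finset.range (Nat.log 2 (m^j)), WI I i := SI_nonneg I _
      have hstep1 : |phiI I m| ≤ (∑ i ∈ Finset.range (Nat.log 2 (m^j)), WI I i) / j := by
        rw [le_div_iff₀ hjpos, mul_comm]
        exact hB
      have hstep2 : (∑ i ∈ Finset.range (Nat.log 2 (m^j)), WI I i) / j
          ≤ (m:ℝ) * ((∑ i ∈ Finset.range (Nat.log 2 (m^j)), WI I i) / ((Nat.log 2 (m^j) : ℕ):ℝ)) := by
        rw [show (m:ℝ) * ((∑ i ∈ Finset.range (Nat.log 2 (m^j)), WI I i) / ((Nat.log 2 (m^j) : ℕ):ℝ))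
          = ((m:ℝ) * (∑ i ∈ Finset.range (Nat.log 2 (m^j)), WI I i)) / ((Nat.log 2 (m^j) : ℕ):ℝ) from by ring]
        rw [div_le_div_iff₀ hjpos hKpos]
        nlinarith [mul_le_mul_of_nonneg_left hKlej hSnn]
      calc |phiI I m| ≤ (∑ i ∈ Finset.range (Nat.log 2 (m^j)), WI I i) / j := hstep1
        _ ≤ (m:ℝ) * ((∑ i ∈ Finset.range (Nat.log 2 (m^j)), WI I i) / ((Nat.log 2 (m^j) : ℕ):ℝ)) := hstep2
        _ = (m:ℝ) * (((Nat.log 2 (m^j) : ℕ):ℝ)⁻¹ * ∑ i ∈ Finset.range (Nat.log 2 (m^j)), WI I i) := by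
          ring
    have htt : Tendsto (fun j : ℕ => (m:ℝ)
        * (((Nat.log 2 (m^j) : ℕ):ℝ)⁻¹ * ∑ i ∈ Finset.range (Nat.log 2 (m^j)), WI I i))
        atTop (𝓝 0) := by
      have h := (hces.comp hKtend).const_mul (m:ℝ)
      simpa using h
    have hev : ∀ᶠ j in atTop, |phiI I m| ≤ (m:ℝ)
        * (((Nat.log 2 (m^j) : ℕ):ℝ)⁻¹ * ∑ i ∈ Finset.range (Nat.log 2 (m^j)), WI I i) := by
      filter_upwards [eventually_ge_atTop 1] with j hj
      exact hbound j hj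
    have hle : |phiI I m| ≤ 0 := ge_of_tendsto htt hev
    have hnn := abs_nonneg (phiI I m)
    exact abs_eq_zero.mp (le_antisymm hle hnn)

include hbij hrec in
lemma I_01 : I ![(0:ℝ), 1] = 0 := by
  have hp10 : IsProb (![(1:ℝ), 0]) := ⟨fun i => by fin_cases i <;> norm_num, by
    simp [Fin.sum_univ_two]⟩
  have h01 : I ![(0:ℝ), 1] = I ![(1:ℝ), 0] := Iswap01 I hbij 1 0 ![] hp10
  rw [h01, I_10 I hbij hrec]

include hbij hrec hcont in
lemma g_rat (a b N : ℕ) (ha : 1 ≤ a) (hb' : 1 ≤ b) (hN : a + b = N) :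
    I ![(a:ℝ)/(N:ℝ), 1 - (a:ℝ)/(N:ℝ)] = cI I * hb ((a:ℝ)/(N:ℝ)) := by
  have h := twoBlockPhi I hbij hrec a b N ha hb' hN
  rw [phi_zero I hbij hrec hcont N (by omega), phi_zero I hbij hrec hcont a ha,
    phi_zero I hbij hrec hcont b hb'] at h
  have h' : I ![(a:ℝ)/(N:ℝ), 1 - (a:ℝ)/(N:ℝ)] - cI I * hb ((a:ℝ)/(N:ℝ)) = 0 := by
    rw [h]; ring
  linarith

include hbij hrec hcont in
lemma g_eq (t : ℝ) (h0 : 0 ≤ t) (h1 : t ≤ 1) : I ![t, 1-t] = cI I * hb t := by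
  by_cases ht0 : t = 0
  · subst ht0
    have hv : (![(0:ℝ), 1-0] : Fin 2 → ℝ) = ![(0:ℝ), 1] := by norm_num
    rw [hv, I_01 I hbij hrec]
    unfold hb
    simp
  by_cases ht1 : t = 1
  · subst ht1
    have hv : (![(1:ℝ), 1-1] : Fin 2 → ℝ) = ![(1:ℝ), 0] := by norm_num
    rw [hv, I_10 I hbij hrec]
    unfold hb
    simp
  have h0' : 0 < t := lt_of_le_of_ne h0 (Ne.symm ht0)
  have h1' : t < 1 := lt_of_le_of_ne h1 ht1
  set x : ℕ → ℝ := fun k => ((⌊(k:ℝ)*t⌋₊ + 1 : ℕ):ℝ)/(k:ℝ) with hx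
  have hxt : Tendsto x atTop (𝓝 t) := by
    have hup : Tendsto (fun k : ℕ => t + 1/(k:ℝ)) atTop (𝓝 t) := by
      have h := (tendsto_const_nhds : Tendsto (fun _ : ℕ => t) atTop (𝓝 t)).add
        tendsto_one_div_atTop_nhds_zero_nat
      simpa using h
    refine tendsto_of_tendsto_of_tendsto_of_le_of_le'
      (tendsto_const_nhds : Tendsto (fun _ : ℕ => t) atTop (𝓝 t)) hup ?_ ?_
    · filter_upwards [eventually_ge_atTop 1] with k hk
      have hkpos : (0:ℝ) < (k:ℝ) := by exact_mod_cast hk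
      have hlt : (k:ℝ)*t < ((⌊(k:ℝ)*t⌋₊ : ℕ):ℝ) + 1 := Nat.lt_floor_add_one _
      rw [hx]
      show t ≤ ((⌊(k:ℝ)*t⌋₊ + 1 : ℕ):ℝ)/(k:ℝ)
      rw [le_div_iff₀ hkpos]
      push_cast
      push_cast at hlt
      nlinarith
    · filter_upwards [eventually_ge_atTop 1] with k hk
      have hkpos : (0:ℝ) < (k:ℝ) := by exact_mod_cast hk
      have hfl : ((⌊(k:ℝ)*t⌋₊ : ℕ):ℝ) ≤ (k:ℝ)*t := Nat.floor_le (by positivity)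
      show ((⌊(k:ℝ)*t⌋₊ + 1 : ℕ):ℝ)/(k:ℝ) ≤ t + 1/(k:ℝ)
      rw [div_le_iff₀ hkpos]
      have he : (t + 1/(k:ℝ))*(k:ℝ) = (k:ℝ)*t + 1 := by
        field_simp
      push_cast
      push_cast at hfl
      linarith [he]
  have hEv : ∀ᶠ k : ℕ in atTop, x k ∈ Set.Icc (0:ℝ) 1
      ∧ I ![x k, 1 - x k] = cI I * hb (x k) := by
    have hev2 : ∀ᶠ k : ℕ in atTop, (2:ℝ)/(1-t) ≤ (k:ℝ) :=
      tendsto_natCast_atTop_atTop.eventually_ge_atTop _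
    filter_upwards [hev2, eventually_ge_atTop 1] with k hk hk1
    have hkpos : (0:ℝ) < (k:ℝ) := by exact_mod_cast hk1
    have h1t : (0:ℝ) < 1 - t := by linarith
    have hfl : ((⌊(k:ℝ)*t⌋₊ : ℕ):ℝ) ≤ (k:ℝ)*t := Nat.floor_le (by positivity)
    have hkt : (k:ℝ)*t ≤ (k:ℝ) - 2 := by
      have h2 : 2 ≤ (k:ℝ)*(1-t) := (div_le_iff₀ h1t).mp hk
      have hexp : (k:ℝ)*(1-t) = (k:ℝ) - (k:ℝ)*t := by ring
      linarith
    have hubR : ((⌊(k:ℝ)*t⌋₊ : ℕ):ℝ) + 1 + 1 ≤ (k:ℝ) := by linarith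
    have hub : ⌊(k:ℝ)*t⌋₊ + 1 + 1 ≤ k := by exact_mod_cast hubR
    have hbb : 1 ≤ k - (⌊(k:ℝ)*t⌋₊ + 1) := by omega
    have heq := g_rat I hbij hrec hcont (⌊(k:ℝ)*t⌋₊ + 1) (k - (⌊(k:ℝ)*t⌋₊ + 1)) k
      (by omega) hbb (by omega)
    constructor
    · constructor
      · rw [hx]; positivity
      · rw [hx]
        show ((⌊(k:ℝ)*t⌋₊ + 1 : ℕ):ℝ)/(k:ℝ) ≤ 1
        rw [div_le_one hkpos]
        push_cast
        linarith
    · exact heq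
  have hxIcc : ∀ᶠ k : ℕ in atTop, x k ∈ Set.Icc (0:ℝ) 1 := hEv.mono fun k hk => hk.1
  have hwithin : Tendsto x atTop (𝓝[Set.Icc (0:ℝ) 1] t) :=
    tendsto_nhdsWithin_of_tendsto_nhds_of_eventually_within x hxt hxIcc
  have hI : Tendsto (fun k => I ![x k, 1 - x k]) atTop (𝓝 (I ![t, 1-t])) := by
    have hc := (g_contOn I hcont) t ⟨h0, h1⟩
    have hc' : Tendsto (fun u : ℝ => I ![u, 1-u]) (𝓝[Set.Icc (0:ℝ) 1] t)
        (𝓝 (I ![t, 1-t])) := hc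
    exact hc'.comp hwithin
  have hR : Tendsto (fun k => cI I * hb (x k)) atTop (𝓝 (cI I * hb t)) :=
    (((hb_contAt ht0 ht1).tendsto).comp hxt).const_mul _
  have hI' : Tendsto (fun k => cI I * hb (x k)) atTop (𝓝 (I ![t, 1-t])) :=
    hI.congr' (hEv.mono fun k hk => hk.2)
  exact tendsto_nhds_unique hI' hR

include hbij hrec hcont in
lemma master : ∀ n : ℕ, ∀ p : Fin n → ℝ, IsProb p → I p = cI I * shannon p := by
  intro n
  induction n with
  | zero =>
    intro p hp
    have := hp.2
    simp at this
  | succ n IH =>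
    cases n with
    | zero =>
      intro p hp
      have hp0 : p 0 = 1 := by
        have := hp.2
        simpa [Fin.sum_univ_one] using this
      have hpv : p = ![(1:ℝ)] := by
        funext i
        have hi : i = 0 := Fin.fin_one_eq_zero i
        rw [hi, hp0]
        norm_num
      rw [hpv, I_single I hrec]
      unfold shannon
      simp [Fin.sum_univ_one]
    | succ n =>
      intro p hp
      set s := p 0 + p 1 with hs
      set w := Fin.tail (Fin.tail p) with hw
      have hp0 := hp.1 0
      have hp1 := hp.1 1
      have hwpos : ∀ i, 0 ≤ w i := fun i => hp.1 i.succ.succ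
      have hpdec : p = Fin.cons (p 0) (Fin.cons (p 1) w) := by
        funext i
        refine Fin.cases ?_ (fun j => ?_) i
        · simp
        · refine Fin.cases ?_ (fun l => ?_) j
          · rw [Fin.cons_succ, Fin.cons_zero, Fin.succ_zero_eq_one]
          · rw [Fin.cons_succ, Fin.cons_succ]; rfl
      have hsum : p 0 + (p 1 + ∑ i, w i) = 1 := by
        have h2 := hp.2
        conv_lhs at h2 => rw [hpdec]
        rwa [Fin.sum_cons, Fin.sum_cons] at h2
      have hqprob : IsProb (Fin.cons s w : Fin (n+1) → ℝ) :=
        isProb_cons (by linarith) hwpos (by linarith)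
      have hIq := IH (Fin.cons s w) hqprob
      have hsumP : ∑ i, p i * Real.log (p i)
          = p 0 * Real.log (p 0) + p 1 * Real.log (p 1) + ∑ i, w i * Real.log (w i) := by
        conv_lhs => rw [hpdec]
        rw [Fin.sum_univ_succ, Fin.sum_univ_succ]
        simp only [Fin.cons_zero, Fin.cons_succ]
        ring
      have hsumQ : ∑ i, (Fin.cons s w : Fin (n+1) → ℝ) i
            * Real.log ((Fin.cons s w : Fin (n+1) → ℝ) i)
          = s * Real.log s + ∑ i, w i * Real.log (w i) := by
        rw [Fin.sum_univ_succ]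
        simp only [Fin.cons_zero, Fin.cons_succ]
      by_cases hs0 : s = 0
      · have hp0z : p 0 = 0 := by
          rw [hs] at hs0
          linarith
        have hp1z : p 1 = 0 := by
          rw [hs] at hs0
          linarith
        have h := hrec n (Fin.cons s w) hqprob (1/2) (by norm_num) (by norm_num)
        have hv : Fin.cons ((1:ℝ)/2 * (Fin.cons s w : Fin (n+1) → ℝ) 0)
            (Fin.cons ((1-1/2) * (Fin.cons s w : Fin (n+1) → ℝ) 0)
              (Fin.tail (Fin.cons s w : Fin (n+1) → ℝ))) = p := by
        
          rw [hpdec]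
          funext i
          refine Fin.cases ?_ (fun j => ?_) i
          · simp [hs0, hp0z]
          · refine Fin.cases ?_ (fun l => ?_) j
            · simp [hs0, hp1z]
            · simp [Fin.tail_cons]
        rw [hv] at h
        have hq00 : (Fin.cons s w : Fin (n+1) → ℝ) 0 = s := Fin.cons_zero _ _
        have hcoef : (Fin.cons s w : Fin (n+1) → ℝ) 0 * I ![(1:ℝ)/2, 1 - 1/2] = 0 := by
          rw [hq00, hs0]
          ring
        rw [hcoef, add_zero] at h
        have hsp : shannon p = shannon (Fin.cons s w : Fin (n+1) → ℝ) := by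
          unfold shannon
          rw [hsumP, hsumQ, hp0z, hp1z, hs0]
          simp
        rw [h, hIq, hsp]
      · have hspos : 0 < s := lt_of_le_of_ne (by linarith) (Ne.symm hs0)
        set t := p 0 / s with ht
        have ht0 : 0 ≤ t := by positivity
        have ht1 : t ≤ 1 := by
          rw [ht, div_le_one hspos]
          linarith
        have h := hrec n (Fin.cons s w) hqprob t ht0 ht1
        have hq00 : (Fin.cons s w : Fin (n+1) → ℝ) 0 = s := Fin.cons_zero _ _
        have hts : t * s = p 0 := by
          rw [ht]
          field_simp
        have h1ts : (1 - t) * s = p 1 := by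
          rw [ht]
          field_simp
          linarith
        have hv : Fin.cons (t * (Fin.cons s w : Fin (n+1) → ℝ) 0)
            (Fin.cons ((1-t) * (Fin.cons s w : Fin (n+1) → ℝ) 0)
              (Fin.tail (Fin.cons s w : Fin (n+1) → ℝ))) = p := by
          rw [hq00]
          conv_rhs => rw [hpdec]
          funext i
          refine Fin.cases ?_ (fun j => ?_) i
          · simp [hts]
          · refine Fin.cases ?_ (fun l => ?_) j
            · simp [Fin.cons_succ, h1ts]
            · simp [Fin.tail_cons]
        rw [hv, hq00] at h
        rw [g_eq I hbij hrec hcont t ht0 ht1, hIq] at h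
        have hchain : shannon p = shannon (Fin.cons s w : Fin (n+1) → ℝ) + s * hb t := by
          unfold shannon
          rw [hsumP, hsumQ]
          have hkey : p 0 * Real.log (p 0) + p 1 * Real.log (p 1)
              = s * Real.log s - s * hb t := by
            unfold hb
            have h1t : 1 - t = p 1 / s := by
              rw [ht]
              field_simp
              linarith
            rcases eq_or_lt_of_le hp0 with hz0 | hpos0
            · have hp1s : p 1 = s := by rw [hs]; linarith
              have htz : t = 0 := by rw [ht, ← hz0]; simp
              rw [htz, ← hz0, hp1s]
              norm_num
            rcases eq_or_lt_of_le hp1 with hz1 | hpos1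
            · have hp0s : p 0 = s := by rw [hs]; linarith
              have htz : t = 1 := by rw [ht, hp0s, div_self (ne_of_gt hspos)]
              rw [htz, ← hz1, hp0s]
              norm_num
            · have hlog0 : Real.log t = Real.log (p 0) - Real.log s := by
                rw [ht, Real.log_div (ne_of_gt hpos0) (ne_of_gt hspos)]
              have hlog1 : Real.log (1 - t) = Real.log (p 1) - Real.log s := by
                rw [h1t, Real.log_div (ne_of_gt hpos1) (ne_of_gt hspos)]
              rw [hlog0, hlog1]
              have hexp : s * -(t * (Real.log (p 0) - Real.log s)
                  + (1-t) * (Real.log (p 1) - Real.log s))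
                  = -(p 0 * (Real.log (p 0) - Real.log s) + p 1 * (Real.log (p 1) - Real.log s)) := by
                rw [← hts, ← h1ts]
                ring
              rw [hexp]
              have hps : p 0 + p 1 = s := hs.symm
              linear_combination (Real.log s) * hps
          rw [hkey]
          ring
        rw [h, hchain]
        ring

end Faddeev

/-- Faddeev's characterization of Shannon entropy. -/
theorem stmt4
    (I : ∀ {X : Type} [Fintype X], (X → ℝ) → ℝ)
    (hnn : ∀ {X : Type} [Fintype X] (p : X → ℝ), IsProb p → 0 ≤ I p)
    (hbij : ∀ {X X' : Type} [Fintype X] [Fintype X'] (e : X ≃ X') (p : X → ℝ),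
      IsProb p → I (fun j => p (e.symm j)) = I p)
    (hcont : ∀ n : ℕ, ContinuousOn (fun p : Fin n → ℝ => I p) {p | IsProb p})
    (hrec : ∀ (n : ℕ) (p : Fin (n + 1) → ℝ), IsProb p → ∀ t : ℝ, 0 ≤ t → t ≤ 1 →
      I (Fin.cons (t * p 0) (Fin.cons ((1 - t) * p 0) (Fin.tail p)))
        = I p + p 0 * I ![t, 1 - t]) :
    ∃ c : ℝ, 0 ≤ c ∧ ∀ {X : Type} [Fintype X] (p : X → ℝ), IsProb p →
      I p = c * shannon p := by
  refine ⟨cI I, ?_, ?_⟩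
  · unfold cI fI
    apply div_nonneg ?_ (le_of_lt (Real.log_pos one_lt_two))
    apply hnn
    constructor
    · intro i
      positivity
    · rw [sum_const_fin]
      norm_num
  · intro X _ p hp
    have e := Fintype.equivFin X
    have hq : IsProb (fun j => p (e.symm j)) := by
      constructor
      · intro j
        exact hp.1 _
      · rw [Equiv.sum_comp e.symm p]
        exact hp.2
    have hI := hbij e p hp
    have hm : I (fun j => p (e.symm j)) = cI I * shannon (fun j => p (e.symm j)) :=
      master I hbij hrec hcont (Fintype.card X) (fun j => p (e.symm j)) hq
    have hsh : shannon (fun j => p (e.symm j)) = shannon p := by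
      unfold shannon
      rw [Equiv.sum_comp e.symm (fun i => p i * Real.log (p i))]
    rw [← hI, hm, hsh]
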